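/- Let d and K be positive integers, λ > 0, H > 0, and let φ^(1),…,φ^(K) ∈ ℝ^d satisfy ‖φ^(k)‖₂² ≤ H for all k. Define V_0 := λ·I_d and V_k := λ·I_d + ∑_{j=1}^{k} φ^(j)(φ^(j))ᵀ. Then ∑_{k=1}^K min{1, φ^(k)ᵀ V_{k−1}^{-1} φ^(k)} ≤ 2·d·log(1 + K·H/(d·λ)). -/

import Mathlib

open scoped BigOperators Matrix

noncomputable section

/-- Design matrix `V_k := λ·I_d + ∑_{j=1}^{k} φ^(j) (φ^(j))ᵀ` (so `V_0 = λ·I_d`). -/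
def designMat (d : ℕ) (lam : ℝ) (φ : ℕ → Fin d → ℝ) (k : ℕ) :
    Matrix (Fin d) (Fin d) ℝ :=
  lam • (1 : Matrix (Fin d) (Fin d) ℝ) +
    ∑ j ∈ Finset.Icc 1 k, Matrix.vecMulVec (φ j) (φ j)

lemma vecMulVec_self_posSemidef {d : ℕ} (u : Fin d → ℝ) :
    (Matrix.vecMulVec u u).PosSemidef := by
  refine Matrix.PosSemidef.of_dotProduct_mulVec_nonneg ?_ ?_
  · ext i j; simp [Matrix.vecMulVec, Matrix.conjTranspose_apply, mul_comm]
  · intro x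
    simp only [star_trivial]
    have h : (Matrix.vecMulVec u u) *ᵥ x = (u ⬝ᵥ x) • u := by
      ext i
      simp [Matrix.vecMulVec, Matrix.mulVec, dotProduct, Finset.sum_mul, Finset.mul_sum]
      ring_nf
    rw [h, dotProduct_smul, dotProduct_comm x u]
    exact mul_self_nonneg _

lemma designMat_posDef {d : ℕ} (lam : ℝ) (hlam : 0 < lam) (φ : ℕ → Fin d → ℝ) (k : ℕ) :
    (designMat d lam φ k).PosDef := by
  have h1 : (lam • (1 : Matrix (Fin d) (Fin d) ℝ)).PosDef := by
    rw [Matrix.smul_one_eq_diagonal]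
    exact Matrix.PosDef.diagonal fun _ => hlam
  have h2 : (∑ j ∈ Finset.Icc 1 k, Matrix.vecMulVec (φ j) (φ j)).PosSemidef := by
    induction k with
    | zero => simpa using Matrix.PosSemidef.zero
    | succ m ih =>
      rw [Finset.sum_Icc_succ_top (Nat.succ_le_succ (Nat.zero_le m))]
      exact ih.add (vecMulVec_self_posSemidef _)
  exact h1.add_posSemidef h2

lemma det_add_vecMulVec {d : ℕ} (A : Matrix (Fin d) (Fin d) ℝ) (hA : A.PosDef) (u : Fin d → ℝ) :
    (A + Matrix.vecMulVec u u).det = A.det * (1 + u ⬝ᵥ A⁻¹ *ᵥ u) := by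
  have hdet : IsUnit A.det := hA.det_pos.ne'.isUnit
  have key : A + Matrix.vecMulVec u u
      = A * (1 + Matrix.replicateCol (Fin 1) (A⁻¹ *ᵥ u) * Matrix.replicateRow (Fin 1) u) := by
    rw [Matrix.mul_add, Matrix.mul_one, Matrix.replicateCol_mulVec, ← Matrix.mul_assoc, ← Matrix.mul_assoc,
      Matrix.mul_nonsing_inv A hdet, Matrix.one_mul, Matrix.vecMulVec_eq (Fin 1)]
    rfl
  erw [key, Matrix.det_mul, Matrix.det_one_add_replicateCol_mul_replicateRow]

lemma designMat_succ {d : ℕ} (lam : ℝ) (φ : ℕ → Fin d → ℝ) (m : ℕ) :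
    designMat d lam φ (m + 1)
      = designMat d lam φ m + Matrix.vecMulVec (φ (m + 1)) (φ (m + 1)) := by
  unfold designMat
  rw [Finset.sum_Icc_succ_top (Nat.succ_le_succ (Nat.zero_le m)), add_assoc]

lemma designMat_det_prod {d : ℕ} (lam : ℝ) (hlam : 0 < lam) (φ : ℕ → Fin d → ℝ) (K : ℕ) :
    (designMat d lam φ K).det
      = (designMat d lam φ 0).det *
        ∏ k ∈ Finset.Icc 1 K, (1 + φ k ⬝ᵥ (designMat d lam φ (k - 1))⁻¹ *ᵥ φ k) := by
  induction K with
  | zero => simp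
  | succ m ih =>
    rw [Finset.prod_Icc_succ_top (Nat.succ_le_succ (Nat.zero_le m)), ← mul_assoc, ← ih,
      designMat_succ, det_add_vecMulVec _ (designMat_posDef lam hlam φ m)]
    simp

lemma trace_eq_sum_eigenvalues {d : ℕ} {A : Matrix (Fin d) (Fin d) ℝ} (hA : A.IsHermitian) :
    A.trace = ∑ i, hA.eigenvalues i := by
  simpa using hA.trace_eq_sum_eigenvalues

lemma designMat_trace_le {d K : ℕ} (lam H : ℝ) (φ : ℕ → Fin d → ℝ)
    (hφ : ∀ k ∈ Finset.Icc 1 K, φ k ⬝ᵥ φ k ≤ H) :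
    (designMat d lam φ K).trace ≤ d * lam + K * H := by
  unfold designMat
  rw [Matrix.trace_add, Matrix.trace_smul, Matrix.trace_one, Matrix.trace_sum]
  have h1 : ∀ j, (Matrix.vecMulVec (φ j) (φ j)).trace = φ j ⬝ᵥ φ j := by
    intro j
    rw [Matrix.vecMulVec_eq (Fin 1), Matrix.trace_replicateCol_mul_replicateRow]
  have h2 : ∑ j ∈ Finset.Icc 1 K, (Matrix.vecMulVec (φ j) (φ j)).trace ≤ K * H := by
    calc ∑ j ∈ Finset.Icc 1 K, (Matrix.vecMulVec (φ j) (φ j)).trace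
        ≤ ∑ j ∈ Finset.Icc 1 K, H := by
          refine Finset.sum_le_sum fun j hj => ?_
          rw [h1]; exact hφ j hj
      _ = K * H := by simp [Nat.card_Icc]
  have : (lam • (Fintype.card (Fin d) : ℝ)) = d * lam := by
    simp [mul_comm]
  rw [this]
  linarith

/-- `log det A ≤ d * log (trace A / d)` for a positive definite `A`. -/
lemma log_det_le {d : ℕ} (hd : 0 < d) {A : Matrix (Fin d) (Fin d) ℝ} (hA : A.PosDef) :
    Real.log A.det ≤ d * Real.log (A.trace / d) := by
  set μ := hA.isHermitian.eigenvalues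
  have hμpos : ∀ i, 0 < μ i := hA.eigenvalues_pos
  have htr : A.trace = ∑ i, μ i := trace_eq_sum_eigenvalues hA.isHermitian
  have hdet : A.det = ∏ i, μ i := by
    simpa using hA.isHermitian.det_eq_prod_eigenvalues
  set c : ℝ := A.trace / d with hc
  have htrpos : 0 < A.trace := by
    rw [htr]
    exact Finset.sum_pos (fun i _ => hμpos i) (by simp [Finset.univ_nonempty_iff, ← Fin.pos_iff_nonempty, hd])
  have hcpos : 0 < c := div_pos htrpos (by exact_mod_cast hd)
  have hlog : Real.log A.det = ∑ i, Real.log (μ i) := by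
    rw [hdet, Real.log_prod]
    exact fun i _ => (hμpos i).ne'
  have key : ∀ i, Real.log (μ i) ≤ Real.log c + μ i / c - 1 := by
    intro i
    have := Real.log_le_sub_one_of_pos (div_pos (hμpos i) hcpos)
    rw [Real.log_div (hμpos i).ne' hcpos.ne'] at this
    linarith
  calc Real.log A.det = ∑ i, Real.log (μ i) := hlog
    _ ≤ ∑ i, (Real.log c + μ i / c - 1) := Finset.sum_le_sum fun i _ => key i
    _ = d * Real.log c + (∑ i, μ i) / c - d := by
        rw [Finset.sum_sub_distrib, Finset.sum_add_distrib, ← Finset.sum_div]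
        simp [mul_comm]
    _ = d * Real.log c := by
        rw [← htr, hc]
        field_simp
        ring
    _ = d * Real.log (A.trace / d) := rfl

lemma min_le_two_log {x : ℝ} (hx : 0 ≤ x) : min 1 x ≤ 2 * Real.log (1 + x) := by
  rcases le_total x 1 with h | h
  · rw [min_eq_right h]
    have h1 : 1 - (1 + x)⁻¹ ≤ Real.log (1 + x) :=
      Real.one_sub_inv_le_log_of_pos (by linarith)
    have h2 : x / 2 ≤ 1 - (1 + x)⁻¹ := by
      have he : 1 - (1 + x)⁻¹ = x / (1 + x) := by
        field_simp
        ring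
      rw [he]
      exact div_le_div_of_nonneg_left hx (by linarith) (by linarith)
    linarith
  · rw [min_eq_left (by linarith : (1:ℝ) ≤ x)]
    have h1 : Real.log 2 ≤ Real.log (1 + x) :=
      Real.log_le_log (by norm_num) (by linarith)
    have h2 := Real.log_two_gt_d9
    linarith

/-- Elliptical potential bound invoked in the proof of Lemma D.1 of the paper:
`∑_{k=1}^K min{1, φ^(k)ᵀ V_{k-1}⁻¹ φ^(k)} ≤ 2·d·log(1 + K·H/(d·λ))`. -/
theorem elliptical_potential_bound
    (d K : ℕ) (hd : 0 < d) (hK : 0 < K)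
    (lam : ℝ) (hlam : 0 < lam) (H : ℝ) (hH : 0 < H)
    (φ : ℕ → Fin d → ℝ)
    (hφ : ∀ k ∈ Finset.Icc 1 K, φ k ⬝ᵥ φ k ≤ H) :
    ∑ k ∈ Finset.Icc 1 K,
        min 1 (φ k ⬝ᵥ (designMat d lam φ (k - 1))⁻¹.mulVec (φ k)) ≤
      2 * d * Real.log (1 + K * H / (d * lam)) := by
  set u : ℕ → ℝ := fun k => φ k ⬝ᵥ (designMat d lam φ (k - 1))⁻¹ *ᵥ φ k with hu_def
  have hu : ∀ k, 0 ≤ u k := by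
    intro k
    have h := ((designMat_posDef lam hlam φ (k - 1)).inv.posSemidef).dotProduct_mulVec_nonneg (φ k)
    simpa using h
  have hdpos : (0:ℝ) < d := by exact_mod_cast hd
  have hKpos : (0:ℝ) < K := by exact_mod_cast hK
  -- step 1 : bound by logs
  have step1 : ∑ k ∈ Finset.Icc 1 K, min 1 (u k)
      ≤ 2 * ∑ k ∈ Finset.Icc 1 K, Real.log (1 + u k) := by
    rw [Finset.mul_sum]
    exact Finset.sum_le_sum fun k _ => min_le_two_log (hu k)
  -- step 2 : sum of logs equals log of the determinant ratio
  have hVK := designMat_posDef lam hlam φ K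
  have hV0det : (designMat d lam φ 0).det = lam ^ d := by
    unfold designMat
    simp [Matrix.det_smul]
  have step2 : ∑ k ∈ Finset.Icc 1 K, Real.log (1 + u k)
      = Real.log (designMat d lam φ K).det - d * Real.log lam := by
    have hprod : (designMat d lam φ K).det
        = lam ^ d * ∏ k ∈ Finset.Icc 1 K, (1 + u k) := by
      rw [designMat_det_prod lam hlam φ K, hV0det]
    rw [← Real.log_prod (fun k _ => by have := hu k; positivity)]
    rw [hprod, Real.log_mul (by positivity) ?hne, Real.log_pow]
    · ring
    case hne =>
      exact (Finset.prod_pos fun k _ => by have := hu k; positivity).ne'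
  -- step 3 : bound log det via the trace
  have htr_le : (designMat d lam φ K).trace ≤ d * lam + K * H :=
    designMat_trace_le lam H φ hφ
  have step3 : Real.log (designMat d lam φ K).det
      ≤ d * Real.log ((d * lam + K * H) / d) := by
    refine (log_det_le hd hVK).trans ?_
    have htrpos : 0 < (designMat d lam φ K).trace := by
      have := trace_eq_sum_eigenvalues hVK.isHermitian
      rw [this]
      exact Finset.sum_pos (fun i _ => hVK.eigenvalues_pos i)
        (by simp [Finset.univ_nonempty_iff, ← Fin.pos_iff_nonempty, hd])
    have hle : (designMat d lam φ K).trace / d ≤ (d * lam + K * H) / d := by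
      gcongr
    have := Real.log_le_log (div_pos htrpos hdpos) hle
    nlinarith [this, hdpos]
  -- step 4 : algebra
  have step4 : (d:ℝ) * Real.log ((d * lam + K * H) / d) - d * Real.log lam
      = d * Real.log (1 + K * H / (d * lam)) := by
    have h1 : (1 : ℝ) + K * H / (d * lam) = ((d * lam + K * H) / d) / lam := by
      field_simp
    rw [h1, Real.log_div (by positivity) hlam.ne']
    ring
  calc ∑ k ∈ Finset.Icc 1 K, min 1 (u k)
      ≤ 2 * ∑ k ∈ Finset.Icc 1 K, Real.log (1 + u k) := step1
    _ = 2 * (Real.log (designMat d lam φ K).det - d * Real.log lam) := by rw [step2]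
    _ ≤ 2 * (d * Real.log ((d * lam + K * H) / d) - d * Real.log lam) := by linarith [step3]
    _ = 2 * d * Real.log (1 + K * H / (d * lam)) := by rw [step4]; ring
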